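/- Let G be a group and H an infinite subgroup of G that is wq-normal in G, i.e. for every subgroup K of G with H ≤ K and K ≠ G there exists g ∈ G \ K with gKg⁻¹ ∩ K infinite. If G is a normal subgroup of a group Ḡ, then H is wq-normal in Ḡ: for every subgroup K of Ḡ with H ≤ K and K ≠ Ḡ there exists g ∈ Ḡ \ K such that gKg⁻¹ ∩ K is infinite. -/

import Mathlib

/-- wq-normality passes to normal extensions: if `H` is an infinite wq-normal subgroup of `G`
and `G` is a normal subgroup of `Ḡ`, then `H` is wq-normal in `Ḡ`. -/
theorem stmt1 {Gbar : Type*} [Group Gbar] (G : Subgroup Gbar) [G.Normal]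
    (H : Subgroup G) [Infinite H]
    (hwq : ∀ K : Subgroup G, H ≤ K → K ≠ ⊤ →
      ∃ g : G, g ∉ K ∧ Infinite ↥(Subgroup.map (MulAut.conj g).toMonoidHom K ⊓ K)) :
    ∀ K : Subgroup Gbar, Subgroup.map G.subtype H ≤ K → K ≠ ⊤ →
      ∃ g : Gbar, g ∉ K ∧ Infinite ↥(Subgroup.map (MulAut.conj g).toMonoidHom K ⊓ K) := by
  intro K hHK hKtop
  by_cases hGK : G ≤ K
  · obtain ⟨g, hg⟩ : ∃ g, g ∉ K := by
      by_contra h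
      push_neg at h
      exact hKtop ((Subgroup.eq_top_iff' K).mpr h)
    refine ⟨g, hg, ?_⟩
    have hm : ∀ h : H, ((h : G) : Gbar) ∈
        Subgroup.map (MulAut.conj g).toMonoidHom K ⊓ K := by
      intro h
      constructor
      · refine ⟨g⁻¹ * ((h : G) : Gbar) * g, ?_, ?_⟩
        · have : g⁻¹ * ((h : G) : Gbar) * g⁻¹⁻¹ ∈ G :=
            Subgroup.Normal.conj_mem ‹G.Normal› _ (h : G).2 g⁻¹
          rw [inv_inv] at this
          exact hGK this
        · simp [mul_assoc]
      · exact hHK ⟨(h : G), h.2, rfl⟩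
    exact Infinite.of_injective (fun h : H => (⟨_, hm h⟩ :
        ↥(Subgroup.map (MulAut.conj g).toMonoidHom K ⊓ K)))
      (fun a b hab => Subtype.ext (Subtype.ext (by simpa using congrArg Subtype.val hab)))
  · set K' : Subgroup G := K.comap G.subtype with hK'
    have hHK' : H ≤ K' := fun h hh => hHK ⟨h, hh, rfl⟩
    have hK'top : K' ≠ ⊤ := by
      intro h
      exact hGK fun x hx => (h ▸ Subgroup.mem_top (⟨x, hx⟩ : G) : (⟨x, hx⟩ : G) ∈ K')
    obtain ⟨g, hgK', hinf⟩ := hwq K' hHK' hK'top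
    refine ⟨(g : Gbar), fun hgK => hgK' hgK, ?_⟩
    have hm : ∀ x : ↥(Subgroup.map (MulAut.conj g).toMonoidHom K' ⊓ K'),
        (((x : G)) : Gbar) ∈ Subgroup.map (MulAut.conj (g : Gbar)).toMonoidHom K ⊓ K := by
      intro x
      obtain ⟨hx1, hx2⟩ := x.2
      constructor
      · obtain ⟨k, hk, hk2⟩ := hx1
        refine ⟨(k : Gbar), hk, ?_⟩
        have := congrArg G.subtype hk2
        simpa using this
      · exact hx2
    exact Infinite.of_injective (fun x => (⟨_, hm x⟩ :
        ↥(Subgroup.map (MulAut.conj (g : Gbar)).toMonoidHom K ⊓ K)))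
      (fun a b hab => Subtype.ext (Subtype.ext (by simpa using congrArg Subtype.val hab)))
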